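/- Let μ be a locally determined positive measure on Σ, X a Banach space, and F : Ω → X locally Pettis integrable. Then F is Dunford integrable if and only if the vector measure ν_F on Σ^f has bounded semivariation, i.e., ‖ν_F‖(Ω) < ∞. -/

import Mathlib

open MeasureTheory ENNReal
open scoped ENNReal

noncomputable section

variable {Ω : Type*} [MeasurableSpace Ω]
variable {X : Type*} [NormedAddCommGroup X] [NormedSpace ℝ X] [CompleteSpace X]

/-- `F` is weakly `μ`-measurable. -/
def WeaklyMeasurable (μ : Measure Ω) (F : Ω → X) : Prop :=
  ∀ x' : StrongDual ℝ X, AEStronglyMeasurable (fun t => x' (F t)) μ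

/-- `F` is Dunford integrable. -/
def DunfordIntegrable (μ : Measure Ω) (F : Ω → X) : Prop :=
  WeaklyMeasurable μ F ∧ ∀ x' : StrongDual ℝ X, Integrable (fun t => x' (F t)) μ

/-- The Dunford norm `sup_{‖x*‖ ≤ 1} ∫ |⟨F, x*⟩| dμ` (in `ℝ≥0∞`). -/
def dunfordNorm (μ : Measure Ω) (F : Ω → X) : ℝ≥0∞ :=
  ⨆ (x' : StrongDual ℝ X) (_ : ‖x'‖ ≤ 1), ∫⁻ t, ENNReal.ofReal |x' (F t)| ∂μ

/-- `x` is the Pettis integral of `F` over `A`. -/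
def IsPettisIntegralOn (μ : Measure Ω) (F : Ω → X) (A : Set Ω) (x : X) : Prop :=
  ∀ x' : StrongDual ℝ X, x' x = ∫ t in A, x' (F t) ∂μ

/-- `F` is Pettis integrable. -/
def PettisIntegrable (μ : Measure Ω) (F : Ω → X) : Prop :=
  DunfordIntegrable μ F ∧ ∀ A : Set Ω, MeasurableSet A → ∃ x : X, IsPettisIntegralOn μ F A x

-- The Pettis integral of `F` over `A` (junk value `0` if it does not exist).
open Classical in
def pettisIntegral (μ : Measure Ω) (F : Ω → X) (A : Set Ω) : X :=
  if h : ∃ x : X, IsPettisIntegralOn μ F A x then h.choose else 0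

/-- The δ-ring `Σ^f` of measurable sets of finite measure. -/
def finiteMeasureSets (μ : Measure Ω) : Set (Set Ω) :=
  {B | MeasurableSet B ∧ μ B < ∞}

/-- `F` is locally Pettis integrable. -/
def LocPettisIntegrable (μ : Measure Ω) (F : Ω → X) : Prop :=
  WeaklyMeasurable μ F ∧ ∀ B ∈ finiteMeasureSets μ, PettisIntegrable μ (B.indicator F)

/-- `F` is locally Bochner integrable. -/
def LocBochnerIntegrable (μ : Measure Ω) (F : Ω → X) : Prop :=
  AEStronglyMeasurable F μ ∧ ∀ B ∈ finiteMeasureSets μ, Integrable (B.indicator F) μ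

/-- The variation of a scalar set function `lam` defined on a δ-ring `R`,
evaluated at `A`: the supremum of `Σ_j |lam A_j|` over finite disjoint families
of members of `R` contained in `A`. -/
def scalarVariation (R : Set (Set Ω)) (lam : Set Ω → ℝ) (A : Set Ω) : ℝ≥0∞ :=
  ⨆ (P : Finset (Set Ω)) (_ : ∀ B ∈ P, B ∈ R ∧ B ⊆ A)
    (_ : (P : Set (Set Ω)).PairwiseDisjoint id), ∑ B ∈ P, ENNReal.ofReal |lam B|

/-- The variation of a vector set function `ν` defined on a δ-ring `R`. -/
def vectorVariation (R : Set (Set Ω)) (ν : Set Ω → X) (A : Set Ω) : ℝ≥0∞ :=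
  ⨆ (P : Finset (Set Ω)) (_ : ∀ B ∈ P, B ∈ R ∧ B ⊆ A)
    (_ : (P : Set (Set Ω)).PairwiseDisjoint id), ∑ B ∈ P, ENNReal.ofReal ‖ν B‖

/-- The semivariation of a vector set function `ν` defined on a δ-ring `R`. -/
def semivariation (R : Set (Set Ω)) (ν : Set Ω → X) (A : Set Ω) : ℝ≥0∞ :=
  ⨆ (x' : StrongDual ℝ X) (_ : ‖x'‖ ≤ 1),
    scalarVariation R (fun B => x' (ν B)) A

/-- `μ` is semi-finite. -/
def SemiFinite (μ : Measure Ω) : Prop :=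
  ∀ A : Set Ω, MeasurableSet A → 0 < μ A →
    ∃ B ⊆ A, MeasurableSet B ∧ 0 < μ B ∧ μ B < ∞

/-- `μ` is locally determined: it is semi-finite and a set is measurable as soon as
its intersection with every finite-measure set is measurable. -/
def LocallyDetermined (μ : Measure Ω) : Prop :=
  SemiFinite μ ∧ ∀ A : Set Ω,
    (∀ B ∈ finiteMeasureSets μ, MeasurableSet (A ∩ B)) → MeasurableSet A



/-! ### Auxiliary lemmas -/

lemma dual_comp_indicator (x' : StrongDual ℝ X) (B : Set Ω) (F : Ω → X) :
    (fun t => x' (B.indicator F t)) = B.indicator (fun t => x' (F t)) := by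
  funext t
  by_cases h : t ∈ B <;> simp [Set.indicator_apply, h]

lemma loc_integrableOn {μ : Measure Ω} {F : Ω → X} (hF : LocPettisIntegrable μ F) {B : Set Ω}
    (hB : B ∈ finiteMeasureSets μ) (x' : StrongDual ℝ X) :
    IntegrableOn (fun t => x' (F t)) B μ := by
  have h := (hF.2 B hB).1.2 x'
  rw [dual_comp_indicator] at h
  exact (integrable_indicator_iff hB.1).1 h

lemma pettis_spec {μ : Measure Ω} {F : Ω → X} (hF : LocPettisIntegrable μ F) {B : Set Ω}
    (hB : B ∈ finiteMeasureSets μ) (x' : StrongDual ℝ X) :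
    x' (pettisIntegral μ F B) = ∫ t in B, x' (F t) ∂μ := by
  have hex : ∃ x : X, IsPettisIntegralOn μ F B x := by
    obtain ⟨x, hx⟩ := (hF.2 B hB).2 B hB.1
    refine ⟨x, fun y' => ?_⟩
    rw [hx y']
    exact setIntegral_congr_fun hB.1 (fun t ht => by simp [Set.indicator_of_mem ht])
  rw [pettisIntegral, dif_pos hex]
  exact hex.choose_spec x'

lemma semifinite_measure_le {μ : Measure Ω} (hsf : SemiFinite μ) {A : Set Ω}
    (hA : MeasurableSet A) {c : ℝ≥0∞} (hc : c ≠ ∞)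
    (hbd : ∀ B : Set Ω, MeasurableSet B → B ⊆ A → μ B < ∞ → μ B ≤ c) :
    μ A ≤ c := by
  set s : ℝ≥0∞ := ⨆ (B : Set Ω) (_ : MeasurableSet B ∧ B ⊆ A ∧ μ B < ∞), μ B with hs
  have hsle : s ≤ c := iSup_le fun B => iSup_le fun hB => hbd B hB.1 hB.2.1 hB.2.2
  have hsne : s ≠ ∞ := fun h => hc (top_le_iff.1 (h ▸ hsle))
  refine le_trans ?_ hsle
  by_contra hcon
  push_neg at hcon
  -- choose approximating sequence
  have hseq : ∀ n : ℕ, ∃ B : Set Ω,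
      (MeasurableSet B ∧ B ⊆ A ∧ μ B < ∞) ∧ s ≤ μ B + ((n : ℝ≥0∞) + 1)⁻¹ := by
    intro n
    rcases eq_or_ne s 0 with h0 | h0
    · exact ⟨∅, ⟨MeasurableSet.empty, Set.empty_subset A, by simp⟩, by simp [h0]⟩
    · have h1 : s - ((n : ℝ≥0∞) + 1)⁻¹ < s :=
        ENNReal.sub_lt_self hsne h0 (by simp)
      rw [hs] at h1
      obtain ⟨B, hB⟩ := lt_iSup_iff.1 h1
      obtain ⟨hBP, hBlt⟩ := lt_iSup_iff.1 hB
      exact ⟨B, hBP, by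
        rw [← tsub_le_iff_right]
        exact hBlt.le⟩
  choose B hB hBs using hseq
  set D : ℕ → Set Ω := fun n => ⋃ k ∈ Finset.range (n + 1), B k with hD
  have hDmeas : ∀ n, MeasurableSet (D n) :=
    fun n => Finset.measurableSet_biUnion _ (fun k _ => (hB k).1)
  have hDsub : ∀ n, D n ⊆ A := by
    intro n t ht
    simp only [hD, Set.mem_iUnion] at ht
    obtain ⟨k, _, htk⟩ := ht
    exact (hB k).2.1 htk
  have hDfin : ∀ n, μ (D n) < ∞ := by
    intro n
    refine lt_of_le_of_lt (measure_biUnion_finset_le _ _) ?_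
    exact ENNReal.sum_lt_top.2 fun k _ => (hB k).2.2
  have hDle : ∀ n, μ (D n) ≤ s := by
    intro n
    rw [hs]
    exact le_iSup_of_le (D n) (le_iSup_of_le ⟨hDmeas n, hDsub n, hDfin n⟩ le_rfl)
  set C : Set Ω := ⋃ n, B n with hCdef
  have hCU : C = ⋃ n, D n := by
    apply Set.Subset.antisymm
    · refine Set.iUnion_subset fun n => ?_
      refine Set.subset_iUnion_of_subset n ?_
      intro t ht
      simp only [hD, Set.mem_iUnion]
      exact ⟨n, Finset.mem_range.2 (Nat.lt_succ_self n), ht⟩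
    · refine Set.iUnion_subset fun n => ?_
      intro t ht
      simp only [hD, Set.mem_iUnion] at ht
      obtain ⟨k, _, htk⟩ := ht
      exact Set.mem_iUnion.2 ⟨k, htk⟩
  have hDmono : Monotone D := by
    intro m n hmn
    intro t ht
    simp only [hD, Set.mem_iUnion] at ht ⊢
    obtain ⟨k, hk, htk⟩ := ht
    have hk' : k < m + 1 := Finset.mem_range.1 hk
    exact ⟨k, Finset.mem_range.2 (by omega), htk⟩
  have hCmeas : MeasurableSet C := MeasurableSet.iUnion fun n => (hB n).1
  have hCle : μ C ≤ s := by
    rw [hCU, Directed.measure_iUnion hDmono.directed_le]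
    exact iSup_le hDle
  have hCfin : μ C < ∞ := lt_of_le_of_lt hCle (lt_top_iff_ne_top.2 hsne)
  have hsleC : s ≤ μ C := by
    refine ENNReal.le_of_forall_pos_le_add fun ε hε _ => ?_
    obtain ⟨n, hn⟩ := ENNReal.exists_inv_nat_lt (a := (ε : ℝ≥0∞))
      (by exact_mod_cast hε.ne')
    have h1 : ((n : ℝ≥0∞) + 1)⁻¹ ≤ (ε : ℝ≥0∞) := by
      refine le_trans ?_ hn.le
      exact ENNReal.inv_le_inv.2 le_self_add
    calc s ≤ μ (B n) + ((n : ℝ≥0∞) + 1)⁻¹ := hBs n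
      _ ≤ μ C + (ε : ℝ≥0∞) := by
          refine add_le_add ?_ h1
          exact measure_mono (Set.subset_iUnion B n)
  have hACpos : μ (A \ C) ≠ 0 := by
    intro h0
    have : μ A ≤ μ (A \ C) + μ C := by
      refine le_trans (measure_mono ?_) (measure_union_le _ _)
      intro t ht
      by_cases htC : t ∈ C
      · exact Or.inr htC
      · exact Or.inl ⟨ht, htC⟩
    rw [h0, zero_add] at this
    exact absurd (this.trans hCle) (not_le.2 hcon)
  obtain ⟨E, hEsub, hEmeas, hEpos, hEfin⟩ :=
    hsf (A \ C) (hA.diff hCmeas) (pos_iff_ne_zero.2 hACpos)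
  have hdisj : Disjoint C E := by
    refine Set.disjoint_left.2 fun t htC htE => ?_
    exact (hEsub htE).2 htC
  have hGle : μ (C ∪ E) ≤ s := by
    rw [hs]
    refine le_iSup_of_le (C ∪ E) (le_iSup_of_le ⟨hCmeas.union hEmeas,
      Set.union_subset (fun t ht => ?_) (fun t ht => (hEsub ht).1), ?_⟩ le_rfl)
    · -- C ⊆ A
      rcases Set.mem_iUnion.1 ht with ⟨n, htn⟩
      exact (hB n).2.1 htn
    · exact lt_of_le_of_lt (measure_union_le _ _) (ENNReal.add_lt_top.2 ⟨hCfin, hEfin⟩)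
  have hGgt : s < μ (C ∪ E) := by
    rw [measure_union hdisj hEmeas]
    calc s = s + 0 := by rw [add_zero]
      _ < μ C + μ E := by
          refine ENNReal.add_lt_add_of_le_of_lt hsne hsleC hEpos
  exact absurd (hGgt.trans_le hGle) (lt_irrefl s)

lemma lintegral_le_of_finiteMeasureSets {μ : Measure Ω} (hsf : SemiFinite μ)
    {h : Ω → ℝ≥0∞} (hh : Measurable h) {K : ℝ≥0∞} (hK : K ≠ ∞)
    (hbd : ∀ B ∈ finiteMeasureSets μ, ∫⁻ t in B, h t ∂μ ≤ K) :
    ∫⁻ t, h t ∂μ ≤ K := by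
  set A : ℕ → Set Ω := fun n => {t | ((n : ℝ≥0∞) + 1)⁻¹ ≤ h t} with hAdef
  have hAmeas : ∀ n, MeasurableSet (A n) :=
    fun n => measurableSet_le measurable_const hh
  have hAfin : ∀ n, μ (A n) < ∞ := by
    intro n
    have hle : μ (A n) ≤ ((n : ℝ≥0∞) + 1) * K := by
      refine semifinite_measure_le hsf (hAmeas n) ?_ ?_
      · exact ENNReal.mul_ne_top (by simp) hK
      · intro B hBm hBsub hBfin
        have h1 : ((n : ℝ≥0∞) + 1)⁻¹ * μ B ≤ ∫⁻ t in B, h t ∂μ := by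
          rw [← setLIntegral_const B (((n : ℝ≥0∞) + 1)⁻¹)]
          exact setLIntegral_mono hh fun t ht => hBsub ht
        have h2 : ((n : ℝ≥0∞) + 1)⁻¹ * μ B ≤ K := h1.trans (hbd B ⟨hBm, hBfin⟩)
        calc μ B = ((n : ℝ≥0∞) + 1) * (((n : ℝ≥0∞) + 1)⁻¹ * μ B) := by
              rw [← mul_assoc, ENNReal.mul_inv_cancel (by simp) (by simp), one_mul]
          _ ≤ ((n : ℝ≥0∞) + 1) * K := mul_le_mul_right h2 _
    exact lt_of_le_of_lt hle (ENNReal.mul_lt_top (by simp)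
      (lt_top_iff_ne_top.2 hK))
  have hAmono : Monotone A := by
    intro m n hmn t ht
    simp only [hAdef, Set.mem_setOf_eq] at ht ⊢
    refine le_trans ?_ ht
    exact ENNReal.inv_le_inv.2 (add_le_add (by exact_mod_cast hmn) le_rfl)
  have key : ∀ t, h t = ⨆ n, (A n).indicator h t := by
    intro t
    rcases eq_or_ne (h t) 0 with h0 | h0
    · refine le_antisymm (h0 ▸ zero_le) (iSup_le fun n => ?_)
      by_cases htA : t ∈ A n
      · rw [Set.indicator_of_mem htA]
      · rw [Set.indicator_of_notMem htA]; exact zero_le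
    · obtain ⟨n, hn⟩ := ENNReal.exists_inv_nat_lt h0
      have htA : t ∈ A n := by
        simp only [hAdef, Set.mem_setOf_eq]
        refine le_trans ?_ hn.le
        exact ENNReal.inv_le_inv.2 le_self_add
      refine le_antisymm ?_ (iSup_le fun m => ?_)
      · exact le_iSup_of_le n (by rw [Set.indicator_of_mem htA])
      · by_cases htm : t ∈ A m
        · rw [Set.indicator_of_mem htm]
        · rw [Set.indicator_of_notMem htm]; exact zero_le
  calc ∫⁻ t, h t ∂μ = ∫⁻ t, ⨆ n, (A n).indicator h t ∂μ := by
        exact lintegral_congr key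
    _ = ⨆ n, ∫⁻ t, (A n).indicator h t ∂μ := by
        refine lintegral_iSup (fun n => hh.indicator (hAmeas n)) ?_
        intro m n hmn t
        exact Set.indicator_le_indicator_of_subset (hAmono hmn) (fun _ => zero_le) t
    _ ≤ K := by
        refine iSup_le fun n => ?_
        rw [lintegral_indicator (hAmeas n)]
        exact hbd (A n) ⟨hAmeas n, hAfin n⟩

lemma single_le_semivariation {μ : Measure Ω} {F : Ω → X}
    {y' : StrongDual ℝ X} (hy' : ‖y'‖ ≤ 1) {C : Set Ω}
    (hC : C ∈ finiteMeasureSets μ) :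
    ENNReal.ofReal |y' (pettisIntegral μ F C)| ≤
      semivariation (finiteMeasureSets μ) (pettisIntegral μ F) Set.univ := by
  refine le_trans ?_ (le_iSup_of_le y' (le_iSup_of_le hy' le_rfl))
  rw [scalarVariation]
  refine le_iSup_of_le {C} (le_iSup_of_le ?_ (le_iSup_of_le ?_ ?_))
  · intro B hB
    rw [Finset.mem_singleton] at hB
    exact hB ▸ ⟨hC, Set.subset_univ C⟩
  · simp
  · simp

/-- `F` is Dunford integrable iff `ν_F` has bounded semivariation. -/
theorem stmt10 (μ : Measure Ω) (hμ : LocallyDetermined μ)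
    (F : Ω → X) (hF : LocPettisIntegrable μ F) :
    DunfordIntegrable μ F ↔
      semivariation (finiteMeasureSets μ) (pettisIntegral μ F) Set.univ < ∞ := by
  classical
  constructor
  · intro hD
    -- Banach–Steinhaus: uniform bound on the norms of the Pettis integrals
    have hBS : ∀ x' : StrongDual ℝ X, ∃ C : ℝ,
        ∀ B : {B : Set Ω // B ∈ finiteMeasureSets μ},
          ‖(NormedSpace.inclusionInDoubleDual ℝ X (pettisIntegral μ F B.1)) x'‖ ≤ C := by
      intro x'
      refine ⟨∫ t, |x' (F t)| ∂μ, fun B => ?_⟩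
      rw [NormedSpace.dual_def, Real.norm_eq_abs, pettis_spec hF B.2 x']
      calc |∫ t in B.1, x' (F t) ∂μ| ≤ ∫ t in B.1, |x' (F t)| ∂μ := by
            simpa [Real.norm_eq_abs] using
              norm_integral_le_integral_norm (μ := μ.restrict B.1) (f := fun t => x' (F t))
        _ ≤ ∫ t, |x' (F t)| ∂μ :=
            setIntegral_le_integral (hD.2 x').abs
              (Filter.Eventually.of_forall fun t => abs_nonneg _)
    obtain ⟨C', hC'⟩ := banach_steinhaus hBS
    have hemp : (∅ : Set Ω) ∈ finiteMeasureSets μ := ⟨MeasurableSet.empty, by simp⟩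
    have hC'0 : 0 ≤ C' := le_trans (norm_nonneg _) (hC' ⟨∅, hemp⟩)
    have hub : ∀ B ∈ finiteMeasureSets μ, ∀ x' : StrongDual ℝ X, ‖x'‖ ≤ 1 →
        |x' (pettisIntegral μ F B)| ≤ C' := by
      intro B hB x' hx'
      have h2 := (NormedSpace.inclusionInDoubleDual ℝ X (pettisIntegral μ F B)).le_opNorm x'
      rw [NormedSpace.dual_def, Real.norm_eq_abs] at h2
      refine h2.trans ?_
      calc ‖NormedSpace.inclusionInDoubleDual ℝ X (pettisIntegral μ F B)‖ * ‖x'‖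
          ≤ C' * 1 := mul_le_mul (hC' ⟨B, hB⟩) hx' (norm_nonneg _) hC'0
        _ = C' := mul_one C'
    rw [semivariation]
    refine lt_of_le_of_lt (iSup_le fun x' => iSup_le fun hx' => ?_)
      (ENNReal.ofReal_lt_top (r := C' + C'))
    rw [scalarVariation]
    refine iSup_le fun P => iSup_le fun hP => iSup_le fun hdisj => ?_
    have hadd : ∀ Q : Finset (Set Ω), Q ⊆ P →
        (⋃ B ∈ Q, B) ∈ finiteMeasureSets μ ∧
        ∑ B ∈ Q, x' (pettisIntegral μ F B) = x' (pettisIntegral μ F (⋃ B ∈ Q, B)) := by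
      intro Q hQ
      have hmem : ∀ B ∈ Q, B ∈ finiteMeasureSets μ := fun B hB => (hP B (hQ hB)).1
      have hUm : MeasurableSet (⋃ B ∈ Q, B) :=
        Finset.measurableSet_biUnion Q (fun B hB => (hmem B hB).1)
      have hUf : μ (⋃ B ∈ Q, B) < ∞ := by
        refine lt_of_le_of_lt (measure_biUnion_finset_le Q (fun B => B)) ?_
        exact ENNReal.sum_lt_top.2 fun B hB => (hmem B hB).2
      have hU : (⋃ B ∈ Q, B) ∈ finiteMeasureSets μ := ⟨hUm, hUf⟩
      refine ⟨hU, ?_⟩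
      rw [pettis_spec hF hU x']
      rw [integral_biUnion_finset Q (fun B hB => (hmem B hB).1)
        (hdisj.subset (Finset.coe_subset.2 hQ)) (fun B hB => (hD.2 x').integrableOn)]
      exact Finset.sum_congr rfl fun B hB => pettis_spec hF (hmem B hB) x'
    rw [← ENNReal.ofReal_sum_of_nonneg (fun B _ => abs_nonneg _)]
    refine ENNReal.ofReal_le_ofReal ?_
    rw [← Finset.sum_filter_add_sum_filter_not P (fun B => 0 ≤ x' (pettisIntegral μ F B))
      (fun B => |x' (pettisIntegral μ F B)|)]
    have hplus : ∑ B ∈ P.filter (fun B => 0 ≤ x' (pettisIntegral μ F B)),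
        |x' (pettisIntegral μ F B)| ≤ C' := by
      obtain ⟨hU, hsum⟩ := hadd (P.filter (fun B => 0 ≤ x' (pettisIntegral μ F B)))
        (Finset.filter_subset _ P)
      calc ∑ B ∈ P.filter (fun B => 0 ≤ x' (pettisIntegral μ F B)),
            |x' (pettisIntegral μ F B)|
          = ∑ B ∈ P.filter (fun B => 0 ≤ x' (pettisIntegral μ F B)),
            x' (pettisIntegral μ F B) :=
            Finset.sum_congr rfl fun B hB => abs_of_nonneg (Finset.mem_filter.1 hB).2
        _ = x' (pettisIntegral μ F _) := hsum
        _ ≤ |x' (pettisIntegral μ F _)| := le_abs_self _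
        _ ≤ C' := hub _ hU x' hx'
    have hminus : ∑ B ∈ P.filter (fun B => ¬ 0 ≤ x' (pettisIntegral μ F B)),
        |x' (pettisIntegral μ F B)| ≤ C' := by
      obtain ⟨hU, hsum⟩ := hadd (P.filter (fun B => ¬ 0 ≤ x' (pettisIntegral μ F B)))
        (Finset.filter_subset _ P)
      calc ∑ B ∈ P.filter (fun B => ¬ 0 ≤ x' (pettisIntegral μ F B)),
            |x' (pettisIntegral μ F B)|
          = ∑ B ∈ P.filter (fun B => ¬ 0 ≤ x' (pettisIntegral μ F B)),
            (- x' (pettisIntegral μ F B)) :=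
            Finset.sum_congr rfl fun B hB =>
              abs_of_neg (lt_of_not_ge (Finset.mem_filter.1 hB).2)
        _ = - x' (pettisIntegral μ F _) := by rw [Finset.sum_neg_distrib, hsum]
        _ ≤ |x' (pettisIntegral μ F _)| := neg_le_abs _
        _ ≤ C' := hub _ hU x' hx'
    exact add_le_add hplus hminus
  · intro hM
    refine ⟨hF.1, ?_⟩
    have key : ∀ y' : StrongDual ℝ X, ‖y'‖ ≤ 1 →
        Integrable (fun t => y' (F t)) μ := by
      intro y' hy'
      set M := semivariation (finiteMeasureSets μ) (pettisIntegral μ F) Set.univ with hMdef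
      have hg : AEStronglyMeasurable (fun t => y' (F t)) μ := hF.1 y'
      set g₀ := hg.mk _ with hg₀def
      have hg₀m : StronglyMeasurable g₀ := hg.stronglyMeasurable_mk
      have hae : (fun t => y' (F t)) =ᵐ[μ] g₀ := hg.ae_eq_mk
      set h : Ω → ℝ≥0∞ := fun t => ENNReal.ofReal |g₀ t| with hhdef
      have hhm : Measurable h := ENNReal.measurable_ofReal.comp hg₀m.measurable.abs
      have hbd : ∀ B ∈ finiteMeasureSets μ, ∫⁻ t in B, h t ∂μ ≤ M + M := by
        intro B hB
        set Bp := B ∩ {t | 0 ≤ g₀ t} with hBp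
        set Bm := B ∩ {t | g₀ t < 0} with hBm
        have hBpm : MeasurableSet Bp :=
          hB.1.inter (measurableSet_le measurable_const hg₀m.measurable)
        have hBmm : MeasurableSet Bm :=
          hB.1.inter (measurableSet_lt hg₀m.measurable measurable_const)
        have hBpf : Bp ∈ finiteMeasureSets μ :=
          ⟨hBpm, lt_of_le_of_lt (measure_mono Set.inter_subset_left) hB.2⟩
        have hBmf : Bm ∈ finiteMeasureSets μ :=
          ⟨hBmm, lt_of_le_of_lt (measure_mono Set.inter_subset_left) hB.2⟩
        have hInt : IntegrableOn (fun t => y' (F t)) B μ := loc_integrableOn hF hB y'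
        have hInt0 : IntegrableOn g₀ B μ := hInt.congr (ae_restrict_of_ae hae)
        have hsplit : Bp ∪ Bm = B := by
          rw [hBp, hBm, ← Set.inter_union_distrib_left]
          have : {t | 0 ≤ g₀ t} ∪ {t | g₀ t < 0} = Set.univ := by
            ext t; simp [le_or_gt]
          rw [this, Set.inter_univ]
        have hdisj : Disjoint Bp Bm := by
          refine Set.disjoint_left.2 fun t ht1 ht2 => ?_
          have hh1 : (0 : ℝ) ≤ g₀ t := ht1.2
          have hh2 : g₀ t < 0 := ht2.2
          exact absurd hh1 (not_le.2 hh2)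
        have h1 : ∫⁻ t in B, h t ∂μ = ENNReal.ofReal (∫ t in B, |g₀ t| ∂μ) := by
          rw [ofReal_integral_eq_lintegral_ofReal hInt0.abs
            (Filter.Eventually.of_forall fun t => abs_nonneg _)]
        have h2 : ∫ t in B, |g₀ t| ∂μ = ∫ t in Bp, |g₀ t| ∂μ + ∫ t in Bm, |g₀ t| ∂μ := by
          rw [← hsplit]
          refine setIntegral_union hdisj hBmm ?_ ?_
          · exact (show IntegrableOn (fun t => |g₀ t|) B μ from hInt0.abs).mono_set
              Set.inter_subset_left
          · exact (show IntegrableOn (fun t => |g₀ t|) B μ from hInt0.abs).mono_set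
              Set.inter_subset_left
        have hgBp : ∫ t in Bp, |g₀ t| ∂μ = y' (pettisIntegral μ F Bp) := by
          rw [pettis_spec hF hBpf y']
          rw [setIntegral_congr_fun hBpm (g := g₀) (fun t ht => abs_of_nonneg ht.2)]
          exact integral_congr_ae (ae_restrict_of_ae hae.symm)
        have hgBm : ∫ t in Bm, |g₀ t| ∂μ = - y' (pettisIntegral μ F Bm) := by
          rw [pettis_spec hF hBmf y']
          rw [setIntegral_congr_fun hBmm (g := fun t => - g₀ t)
            (fun t ht => abs_of_neg ht.2), integral_neg]
          rw [integral_congr_ae (ae_restrict_of_ae hae.symm)]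
        rw [h1, h2, hgBp, hgBm]
        refine le_trans ENNReal.ofReal_add_le (add_le_add ?_ ?_)
        · refine le_trans (ENNReal.ofReal_le_ofReal (le_abs_self _)) ?_
          rw [hMdef]
          exact single_le_semivariation hy' hBpf
        · refine le_trans (ENNReal.ofReal_le_ofReal (neg_le_abs _)) ?_
          rw [hMdef]
          exact single_le_semivariation hy' hBmf
      have hfin : ∫⁻ t, h t ∂μ ≤ M + M :=
        lintegral_le_of_finiteMeasureSets hμ.1 hhm
          (ENNReal.add_ne_top.2 ⟨hM.ne, hM.ne⟩) hbd
      refine ⟨hg, ?_⟩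
      rw [hasFiniteIntegral_iff_norm]
      have heq : ∫⁻ t, ENNReal.ofReal ‖y' (F t)‖ ∂μ = ∫⁻ t, h t ∂μ := by
        refine lintegral_congr_ae (hae.mono fun t ht => ?_)
        have ht' : y' (F t) = g₀ t := ht
        simp only [hhdef, Real.norm_eq_abs, ht']
      rw [heq]
      exact lt_of_le_of_lt hfin (ENNReal.add_lt_top.2 ⟨hM, hM⟩)
    intro x'
    by_cases hx : x' = 0
    · simp only [hx, ContinuousLinearMap.zero_apply]
      exact integrable_zero _ _ _
    · have hc : ‖x'‖ ≠ 0 := norm_ne_zero_iff.2 hx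
      have hy' : ‖(‖x'‖⁻¹ • x' : StrongDual ℝ X)‖ ≤ 1 := by
        rw [norm_smul, norm_inv, norm_norm, inv_mul_cancel₀ hc]
      have hInt := key _ hy'
      have : (fun t => x' (F t)) = fun t => ‖x'‖ * ((‖x'‖⁻¹ • x') (F t)) := by
        funext t
        simp [ContinuousLinearMap.smul_apply, smul_eq_mul, ← mul_assoc,
          mul_inv_cancel₀ hc]
      rw [this]
      exact hInt.const_mul _

end
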